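/- arXiv:0902.1031 — 2 statements merged into one kernel-verified Lean document; each statement's English description precedes it below -/
import Mathlib

section
/- Let F be a field of characteristic ≠ 2 and let φ, φ′ be quadratic forms on finite-dimensional F-vector spaces V, V′. The natural embeddings V ↪ V ⊕ V′ and V′ ↪ V ⊕ V′ induce F-algebra homomorphisms C(φ) → C(φ ⊥ φ′) and C(φ′) → C(φ ⊥ φ′); the images of the even parts C₀(φ) and C₀(φ′) under these maps centralize each other, and the resulting F-algebra homomorphism C₀(φ) ⊗_F C₀(φ′) → C₀(φ ⊥ φ′) is injective. -/
set_option maxHeartbeats 1000000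
set_option synthInstance.maxHeartbeats 400000


open scoped TensorProduct

open CliffordAlgebra QuadraticMap

/-- Clifford algebra maps preserve the even part. -/
theorem aux_clifford_map_even {F V W : Type} [Field F] [AddCommGroup V] [Module F V]
    [AddCommGroup W] [Module F W] {Q : QuadraticForm F V} {Q' : QuadraticForm F W}
    (f : Q →qᵢ Q') {x : CliffordAlgebra Q} (hx : x ∈ evenOdd Q 0) :
    CliffordAlgebra.map f x ∈ evenOdd Q' 0 := by
  induction x, hx using CliffordAlgebra.even_induction with
  | algebraMap r =>
      rw [AlgHom.commutes]
      exact SetLike.algebraMap_mem_graded _ _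
  | add a b _ _ iha ihb =>
      rw [map_add]; exact Submodule.add_mem _ iha ihb
  | ι_mul_ι_mul m₁ m₂ a _ ih =>
      rw [map_mul, map_mul, map_apply_ι, map_apply_ι]
      exact zero_add (0 : ZMod 2) ▸
        SetLike.mul_mem_graded (ι_mul_ι_mem_evenOdd_zero Q' (f m₁) (f m₂)) ih

/-- The even Clifford algebras of two quadratic forms embed into the Clifford algebra of their
orthogonal sum with commuting (mutually centralizing) images, and the induced homomorphism
from their tensor product is injective with image inside the even part. -/
theorem even_clifford_tensor_embedding
    (F : Type) [Field F] (hF : (2:F) ≠ 0)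
    (V V' : Type) [AddCommGroup V] [Module F V] [AddCommGroup V'] [Module F V']
    [FiniteDimensional F V] [FiniteDimensional F V']
    (φ : QuadraticForm F V) (φ' : QuadraticForm F V') :
    -- the images of the even parts centralize each other
    (∀ (x : even φ) (y : even φ'),
      Commute (CliffordAlgebra.map (QuadraticMap.Isometry.inl φ φ') (x : CliffordAlgebra φ))
        (CliffordAlgebra.map (QuadraticMap.Isometry.inr φ φ') (y : CliffordAlgebra φ'))) ∧
    -- there is a (necessarily unique) algebra homomorphism from the tensor product of the
    -- even parts, determined on pure tensors, ...
    (∃ h : (even φ ⊗[F] even φ') →ₐ[F] CliffordAlgebra (φ.prod φ'),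
      ∀ (x : even φ) (y : even φ'),
        h (x ⊗ₜ[F] y) = CliffordAlgebra.map (QuadraticMap.Isometry.inl φ φ') (x : CliffordAlgebra φ) *
          CliffordAlgebra.map (QuadraticMap.Isometry.inr φ φ') (y : CliffordAlgebra φ')) ∧
    -- ... and any such homomorphism is injective and lands in the even part
    (∀ h : (even φ ⊗[F] even φ') →ₐ[F] CliffordAlgebra (φ.prod φ'),
      (∀ (x : even φ) (y : even φ'),
        h (x ⊗ₜ[F] y) = CliffordAlgebra.map (QuadraticMap.Isometry.inl φ φ') (x : CliffordAlgebra φ) *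
          CliffordAlgebra.map (QuadraticMap.Isometry.inr φ φ') (y : CliffordAlgebra φ')) →
      Function.Injective h ∧ ∀ t, h t ∈ even (φ.prod φ')) := by
  have hmemx : ∀ x : even φ, (x : CliffordAlgebra φ) ∈ evenOdd φ 0 := fun x => x.prop
  have hmemy : ∀ y : even φ', (y : CliffordAlgebra φ') ∈ evenOdd φ' 0 := fun y => y.prop
  have hcomm : ∀ (x : even φ) (y : even φ'),
      Commute (CliffordAlgebra.map (QuadraticMap.Isometry.inl φ φ') (x : CliffordAlgebra φ))
        (CliffordAlgebra.map (QuadraticMap.Isometry.inr φ φ') (y : CliffordAlgebra φ')) := by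
    intro x y
    exact commute_map_mul_map_of_isOrtho_of_mem_evenOdd_zero_left _ _
      (fun a b => QuadraticMap.IsOrtho.inl_inr a b) _ _ (hmemx x) (hmemy y)
  refine ⟨hcomm, ?_, ?_⟩
  · -- existence
    refine ⟨Algebra.TensorProduct.lift
      ((CliffordAlgebra.map (QuadraticMap.Isometry.inl φ φ')).comp (even φ).val)
      ((CliffordAlgebra.map (QuadraticMap.Isometry.inr φ φ')).comp (even φ').val)
      (fun x y => hcomm x y), fun x y => ?_⟩
    exact Algebra.TensorProduct.lift_tmul _ _ _ x y
  · intro h hh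
    constructor
    · -- injectivity
      have key : h.toLinearMap =
          (CliffordAlgebra.toProd φ φ').toLinearMap ∘ₗ
            (GradedTensorProduct.of F (evenOdd φ) (evenOdd φ')).toLinearMap ∘ₗ
            TensorProduct.map (even φ).val.toLinearMap (even φ').val.toLinearMap := by
        apply TensorProduct.ext'
        intro x y
        simp only [AlgHom.toLinearMap_apply, LinearMap.comp_apply, TensorProduct.map_tmul,
          LinearEquiv.coe_coe]
        rw [hh x y]
        show _ = CliffordAlgebra.toProd φ φ'
          ((x : CliffordAlgebra φ) ᵍ⊗ₜ[F] (y : CliffordAlgebra φ'))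
        rw [CliffordAlgebra.toProd, GradedTensorProduct.lift_tmul]
      have hinj1 : Function.Injective
          (TensorProduct.map (even φ).val.toLinearMap (even φ').val.toLinearMap) := by
        rw [← LinearMap.lTensor_comp_rTensor]
        exact (Module.Flat.lTensor_preserves_injective_linearMap _
            (Subtype.val_injective)).comp
          (Module.Flat.rTensor_preserves_injective_linearMap _ (Subtype.val_injective))
      have hinj2 : Function.Injective (CliffordAlgebra.toProd φ φ') := by
        have hli : Function.LeftInverse (CliffordAlgebra.ofProd φ φ')
            (CliffordAlgebra.toProd φ φ') := fun a =>
          AlgHom.congr_fun (CliffordAlgebra.ofProd_comp_toProd φ φ') a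
        exact hli.injective
      have : Function.Injective h.toLinearMap := by
        rw [key]
        exact hinj2.comp
          ((GradedTensorProduct.of F (evenOdd φ) (evenOdd φ')).injective.comp hinj1)
      exact this
    · -- image in the even part
      intro t
      induction t with
      | zero => simp only [map_zero]; exact Subalgebra.zero_mem _
      | add a b iha ihb => rw [map_add]; exact Subalgebra.add_mem _ iha ihb
      | tmul x y =>
          rw [hh x y]
          exact Subalgebra.mul_mem _ (aux_clifford_map_even _ (hmemx x))
            (aux_clifford_map_even _ (hmemy y))
end

section
/- Let F be a field of characteristic ≠ 2, L/F a quadratic field extension with nontrivial F-automorphism ι, and (V,ψ) a finite-dimensional quadratic space over L. Then the switch map s(v,w) = (w,v) on V ⊕ ^ιV extends to an additive, ι-semilinear ring automorphism s of the Clifford algebra C(ψ ⊥ ^ιψ) satisfying s∘s = id, which preserves the even/odd grading and commutes with the canonical involution of C(ψ ⊥ ^ιψ). -/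
section Conj
variable {F L : Type} [Field F] [Field L] [Algebra F L]

/-- The conjugate of an `L`-module along a ring automorphism `ιL` of `L`: the same additive
group with the scalar action twisted by `ιL`. -/
def Conj (ιL : L ≃ₐ[F] L) (V : Type) : Type := V

instance Conj.addCommGroup (ιL : L ≃ₐ[F] L) (V : Type) [AddCommGroup V] :
    AddCommGroup (Conj ιL V) := inferInstanceAs (AddCommGroup V)

instance Conj.module (ιL : L ≃ₐ[F] L) (V : Type) [AddCommGroup V] [Module L V] :
    Module L (Conj ιL V) := Module.compHom V (ιL.toRingEquiv.toRingHom)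

/-- The identity map, viewed as a map into the conjugate module. -/
def toConj (ιL : L ≃ₐ[F] L) (V : Type) : V → Conj ιL V := fun v => v

/-- The identity map, viewed as a map out of the conjugate module. -/
def ofConj (ιL : L ≃ₐ[F] L) (V : Type) : Conj ιL V → V := fun v => v

lemma Conj.smul_def (ιL : L ≃ₐ[F] L) (V : Type) [AddCommGroup V] [Module L V]
    (c : L) (v : Conj ιL V) : c • v = toConj ιL V (ιL c • ofConj ιL V v) := rfl

variable (ιL : L ≃ₐ[F] L) (V : Type) [AddCommGroup V] [Module L V]

/-- The conjugate quadratic form `^ιψ` on the conjugate module. -/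
noncomputable def conjForm (hι : Function.Involutive ιL) (ψ : QuadraticForm L V) :
    QuadraticForm L (Conj ιL V) where
  toFun v := ιL (ψ (ofConj ιL V v))
  toFun_smul a v := by
    rw [Conj.smul_def]
    show ιL (ψ (ιL a • ofConj ιL V v)) = (a * a) • ιL (ψ (ofConj ιL V v))
    rw [QuadraticMap.map_smul, smul_eq_mul, map_mul, map_mul, hι a, smul_eq_mul]
  exists_companion' := by
    obtain ⟨B, hB⟩ := ψ.exists_companion
    refine ⟨LinearMap.mk₂ L
      (fun x y => ιL (B (ofConj ιL V x) (ofConj ιL V y))) ?_ ?_ ?_ ?_, ?_⟩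
    · intro x x' y
      show ιL (B (ofConj ιL V x + ofConj ιL V x') (ofConj ιL V y)) = _
      rw [map_add, LinearMap.add_apply, map_add]
    · intro a x y
      show ιL (B (ιL a • ofConj ιL V x) (ofConj ιL V y)) = a * ιL (B (ofConj ιL V x) (ofConj ιL V y))
      rw [map_smul, LinearMap.smul_apply, smul_eq_mul, map_mul, hι a]
    · intro x y y'
      show ιL (B (ofConj ιL V x) (ofConj ιL V y + ofConj ιL V y')) = _
      rw [map_add, map_add]
    · intro a x y
      show ιL (B (ofConj ιL V x) (ιL a • ofConj ιL V y)) = a * ιL (B (ofConj ιL V x) (ofConj ιL V y))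
      rw [map_smul, smul_eq_mul, map_mul, hι a]
    · intro x y
      show ιL (ψ (ofConj ιL V x + ofConj ιL V y)) = _
      rw [hB, map_add, map_add]
      rfl
end Conj

section ConjAlg
variable {F L : Type} [Field F] [Field L] [Algebra F L] (ιL : L ≃ₐ[F] L)

instance Conj.ring (A : Type) [Ring A] : Ring (Conj ιL A) := inferInstanceAs (Ring A)

instance Conj.algebra (A : Type) [Ring A] [Algebra L A] : Algebra L (Conj ιL A) :=
  Algebra.ofModule
    (fun r x y =>
      show ιL r • ofConj ιL A x * ofConj ιL A y = ιL r • (ofConj ιL A x * ofConj ιL A y) from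
        smul_mul_assoc _ _ _)
    (fun r x y =>
      show ofConj ιL A x * ιL r • ofConj ιL A y = ιL r • (ofConj ιL A x * ofConj ιL A y) from
        mul_smul_comm _ _ _)

lemma Conj.algebraMap_apply (A : Type) [Ring A] [Algebra L A] (c : L) :
    algebraMap L (Conj ιL A) c = toConj ιL A (algebraMap L A (ιL c)) := by
  rw [Algebra.algebraMap_eq_smul_one]
  show (ιL c) • (1 : A) = algebraMap L A (ιL c)
  rw [Algebra.smul_def, mul_one]

end ConjAlg

/-- The switch map `(v,w) ↦ (w,v)` on `V ⊕ ^ιV` extends to an additive, `ι`-semilinear ring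
automorphism of order 2 of the Clifford algebra of `ψ ⊥ ^ιψ` which preserves the even/odd
grading and commutes with the canonical involution. -/
theorem switch_extends_to_clifford
    (F L : Type) [Field F] [Field L] [Algebra F L]
    (hF : (2:F) ≠ 0) (hquad : Module.finrank F L = 2)
    (ιL : L ≃ₐ[F] L) (hnontriv : ιL ≠ AlgEquiv.refl) (hι : Function.Involutive ιL)
    (V : Type) [AddCommGroup V] [Module L V] [FiniteDimensional L V]
    (ψ : QuadraticForm L V) :
    ∃ S : CliffordAlgebra (ψ.prod (conjForm ιL V hι ψ)) ≃+*
        CliffordAlgebra (ψ.prod (conjForm ιL V hι ψ)),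
      -- ι-semilinear
      (∀ (c : L) (x : CliffordAlgebra (ψ.prod (conjForm ιL V hι ψ))),
        S (c • x) = ιL c • S x) ∧
      -- extends the switch map
      (∀ p : V × Conj ιL V,
        S (CliffordAlgebra.ι (ψ.prod (conjForm ιL V hι ψ)) p) =
          CliffordAlgebra.ι (ψ.prod (conjForm ιL V hι ψ)) (ofConj ιL V p.2, toConj ιL V p.1)) ∧
      -- of order two
      (∀ x, S (S x) = x) ∧
      -- preserves the even/odd grading
      (∀ (i : ZMod 2) (x : CliffordAlgebra (ψ.prod (conjForm ιL V hι ψ))),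
        x ∈ CliffordAlgebra.evenOdd (ψ.prod (conjForm ιL V hι ψ)) i →
          S x ∈ CliffordAlgebra.evenOdd (ψ.prod (conjForm ιL V hι ψ)) i) ∧
      -- commutes with the canonical involution
      (∀ x, S (CliffordAlgebra.reverse (Q := ψ.prod (conjForm ιL V hι ψ)) x) =
        CliffordAlgebra.reverse (Q := ψ.prod (conjForm ιL V hι ψ)) (S x)) := by
  classical
  set Q := ψ.prod (conjForm ιL V hι ψ) with hQ
  -- the switch map, as an L-linear map into the conjugate of the Clifford algebra
  have pair_smul : ∀ (c : L) (p : V × Conj ιL V),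
      (ofConj ιL V (c • p).2, toConj ιL V (c • p).1) =
        ιL c • (ofConj ιL V p.2, toConj ιL V p.1) := by
    intro c p
    refine Prod.ext rfl ?_
    show toConj ιL V (c • p.1) = toConj ιL V (ιL (ιL c) • p.1)
    rw [hι c]
  let f : (V × Conj ιL V) →ₗ[L] Conj ιL (CliffordAlgebra Q) :=
    { toFun := fun p =>
        toConj ιL _ (CliffordAlgebra.ι Q (ofConj ιL V p.2, toConj ιL V p.1))
      map_add' := by
        intro p q
        show CliffordAlgebra.ι Q _ = CliffordAlgebra.ι Q _ + CliffordAlgebra.ι Q _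
        rw [← map_add]
        rfl
      map_smul' := by
        intro c p
        show CliffordAlgebra.ι Q (ofConj ιL V (c • p).2, toConj ιL V (c • p).1) =
          ιL c • CliffordAlgebra.ι Q (ofConj ιL V p.2, toConj ιL V p.1)
        rw [pair_smul, map_smul] }
  have hf : ∀ m, f m * f m = algebraMap L (Conj ιL (CliffordAlgebra Q)) (Q m) := by
    intro m
    rw [Conj.algebraMap_apply]
    show CliffordAlgebra.ι Q _ * CliffordAlgebra.ι Q _ = algebraMap L (CliffordAlgebra Q) _
    rw [CliffordAlgebra.ι_sq_scalar]
    congr 1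
    show ψ (ofConj ιL V m.2) + ιL (ψ m.1) = ιL (ψ m.1 + ιL (ψ (ofConj ιL V m.2)))
    rw [map_add, hι]
    exact add_comm _ _
  let S₀ : CliffordAlgebra Q →ₐ[L] Conj ιL (CliffordAlgebra Q) :=
    CliffordAlgebra.lift Q ⟨f, hf⟩
  let s : CliffordAlgebra Q →+* CliffordAlgebra Q := S₀.toRingHom
  have hgen : ∀ p : V × Conj ιL V, s (CliffordAlgebra.ι Q p) =
      CliffordAlgebra.ι Q (ofConj ιL V p.2, toConj ιL V p.1) := by
    intro p
    show S₀ (CliffordAlgebra.ι Q p) = _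
    exact CliffordAlgebra.lift_ι_apply (f := f) (cond := hf) (x := p)
  have halg : ∀ c : L, s (algebraMap L (CliffordAlgebra Q) c) =
      algebraMap L (CliffordAlgebra Q) (ιL c) := by
    intro c
    show S₀ (algebraMap L (CliffordAlgebra Q) c) = _
    rw [S₀.commutes, Conj.algebraMap_apply]
    rfl
  have hsemi : ∀ (c : L) (x : CliffordAlgebra Q), s (c • x) = ιL c • s x := by
    intro c x
    rw [Algebra.smul_def, map_mul, halg, ← Algebra.smul_def]
  have hinv : ∀ x, s (s x) = x := by
    intro x
    induction x using CliffordAlgebra.induction with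
    | algebraMap r => rw [halg, halg, hι r]
    | ι m => rw [hgen, hgen]; rfl
    | mul a b ha hb => rw [map_mul, map_mul, ha, hb]
    | add a b ha hb => rw [map_add, map_add, ha, hb]
  let S : CliffordAlgebra Q ≃+* CliffordAlgebra Q :=
    { toFun := s, invFun := s, left_inv := hinv, right_inv := hinv,
      map_mul' := s.map_mul, map_add' := s.map_add }
  have hS : ∀ x, S x = s x := fun _ => rfl
  have hpow : ∀ (k : ℕ) (x), x ∈ (LinearMap.range (CliffordAlgebra.ι Q)) ^ k →
      s x ∈ (LinearMap.range (CliffordAlgebra.ι Q)) ^ k := by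
    intro k
    induction k with
    | zero =>
      intro x hx
      rw [pow_zero] at hx ⊢
      obtain ⟨r, rfl⟩ := Submodule.mem_one.mp hx
      rw [halg]
      exact Submodule.mem_one.mpr ⟨ιL r, rfl⟩
    | succ k ih =>
      intro x hx
      rw [pow_succ] at hx ⊢
      refine Submodule.mul_induction_on hx (fun a ha b hb => ?_) (fun a b ha' hb' => ?_)
      · rw [map_mul]
        obtain ⟨m, rfl⟩ := hb
        rw [hgen]
        exact Submodule.mul_mem_mul (ih a ha) (LinearMap.mem_range_self _ _)
      · rw [map_add]
        exact Submodule.add_mem _ ha' hb'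
  refine ⟨S, hsemi, hgen, fun x => hinv x, ?_, ?_⟩
  · intro i x hx
    induction x, hx using CliffordAlgebra.evenOdd_induction with
    | range_ι_pow v h =>
      exact Submodule.mem_iSup_of_mem ⟨i.val, i.natCast_zmod_val⟩ (hpow _ v h)
    | add x y hx hy ihx ihy =>
      rw [map_add]
      exact Submodule.add_mem _ ihx ihy
    | ι_mul_ι_mul m₁ m₂ x hx ihx =>
      rw [hS, map_mul, map_mul, hgen, hgen, ← hS]
      exact zero_add i ▸ SetLike.mul_mem_graded
        (CliffordAlgebra.ι_mul_ι_mem_evenOdd_zero Q _ _) ihx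
  · intro x
    induction x using CliffordAlgebra.induction with
    | algebraMap r =>
      simp only [hS]
      rw [CliffordAlgebra.reverse.commutes, halg, CliffordAlgebra.reverse.commutes]
    | ι m =>
      simp only [hS]
      rw [CliffordAlgebra.reverse_ι, hgen, CliffordAlgebra.reverse_ι]
    | mul a b ha hb =>
      rw [CliffordAlgebra.reverse.map_mul, map_mul, ha, hb, map_mul,
        CliffordAlgebra.reverse.map_mul]
    | add a b ha hb =>
      rw [map_add, map_add, ha, hb, map_add, map_add]
end
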